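/- Let K/F be a Galois extension of number fields, σ ∈ Gal(K/F), δ an F-linear left σ-derivation of K with δ(O_K) ⊆ O_K, 𝔭 a nonzero prime ideal of O_F, and f ∈ O_K[t;σ,δ] monic of degree m. Let Λ = O_K[t;σ,δ]/O_K[t;σ,δ]f and let f̄ ∈ (O_K/𝔭O_K)[t;σ̄,δ̄] be the reduction of f modulo 𝔭O_K. Then the coefficient-wise reduction map Ψ : Λ → S_{f̄} = (O_K/𝔭O_K)[t;σ̄,δ̄]/(O_K/𝔭O_K)[t;σ̄,δ̄]f̄, g ↦ ḡ, is a surjective homomorphism of unital nonassociative rings whose kernel is the two-sided ideal 𝔭Λ = {Σ_{i=0}^{m−1} aᵢtⁱ : aᵢ ∈ 𝔭O_K}, and hence Ψ induces an isomorphism of unital nonassociative rings Λ/𝔭Λ ≅ S_{f̄}. -/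

import Mathlib

/-- A presentation of the skew polynomial ring `S[t;σ,δ]`: a ring `R` together with a
ring homomorphism `C : S →+* R`, a distinguished element `X` (playing the role of `t`)
satisfying the twisted commutation rule `X * C a = C (σ a) * X + C (δ a)`, and such that
every element of `R` is in a unique way a finite sum `∑ C aᵢ * X ^ i`. -/
structure SkewPolyRing (S : Type*) [Ring S] (σ : S →+* S) (δ : S → S)
    (R : Type*) [Ring R] where
  C : S →+* R
  X : R
  X_mul : ∀ a : S, X * C a = C (σ a) * X + C (δ a)
  coeff : R ≃+ (ℕ →₀ S)
  coeff_symm_apply : ∀ p : ℕ →₀ S, coeff.symm p = p.sum fun i a => C a * X ^ i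

namespace SkewPolyRing

variable {S : Type*} [Ring S] {σ : S →+* S} {δ : S → S} {R : Type*} [Ring R]

/-- The degree of a skew polynomial, with `deg 0 = ⊥`. -/
noncomputable def deg (P : SkewPolyRing S σ δ R) (x : R) : WithBot ℕ :=
  (P.coeff x).support.max

/-- The leading coefficient of a skew polynomial. -/
noncomputable def lcoeff (P : SkewPolyRing S σ δ R) (x : R) : S :=
  P.coeff x (WithBot.unbotD 0 (P.deg x))

/-- `f` is monic of degree `m`. -/
def Monic (P : SkewPolyRing S σ δ R) (f : R) (m : ℕ) : Prop :=
  P.deg f = (m : WithBot ℕ) ∧ P.coeff f m = 1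

open Classical in
/-- The remainder of right division by `f`. -/
noncomputable def modr (P : SkewPolyRing S σ δ R) (f g : R) : R :=
  if h : ∃ qr : R × R, g = qr.1 * f + qr.2 ∧ P.deg qr.2 < P.deg f then
    (Classical.choose h).2
  else g

/-- The multiplication `x ∘ y = (x * y) mod_r f` of the Petit algebra `S_f`. -/
noncomputable def pmul (P : SkewPolyRing S σ δ R) (f x y : R) : R :=
  P.modr f (x * y)

/-- The element of `S_f` with coefficient vector `c ∈ S^m`. -/
def ofVec (P : SkewPolyRing S σ δ R) {m : ℕ} (c : Fin m → S) : R :=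
  ∑ i : Fin m, P.C (c i) * P.X ^ (i : ℕ)

end SkewPolyRing
namespace SkewPolyRing

variable {S : Type*} [Ring S] {σ : S →+* S} {δ : S → S} {R : Type*} [Ring R]
  (P : SkewPolyRing S σ δ R)

lemma coeff_symm_single (i : ℕ) (a : S) :
    P.coeff.symm (Finsupp.single i a) = P.C a * P.X ^ i := by
  rw [P.coeff_symm_apply, Finsupp.sum_single_index (by simp)]

lemma coeff_C_mul_X_pow (i : ℕ) (a : S) :
    P.coeff (P.C a * P.X ^ i) = Finsupp.single i a := by
  rw [← P.coeff_symm_single, AddEquiv.apply_symm_apply]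

lemma eq_sum (x : R) : x = (P.coeff x).sum fun i a => P.C a * P.X ^ i := by
  conv_lhs => rw [← P.coeff.symm_apply_apply x]
  rw [P.coeff_symm_apply]

@[elab_as_elim]
lemma induction_on {p : R → Prop} (h0 : p 0) (hadd : ∀ x y, p x → p y → p (x + y))
    (hsingle : ∀ (a : S) (i : ℕ), p (P.C a * P.X ^ i)) (x : R) : p x := by
  rw [P.eq_sum x]
  exact Finset.sum_induction _ p hadd h0 (fun i _ => hsingle _ _)

lemma coeff_one : P.coeff (1 : R) = Finsupp.single 0 1 := by
  have : (1 : R) = P.C 1 * P.X ^ 0 := by simp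
  rw [this, coeff_C_mul_X_pow]

lemma coeff_C_mul (a : S) (z : R) :
    P.coeff (P.C a * z) = Finsupp.mapRange (a * ·) (mul_zero a) (P.coeff z) := by
  induction z using P.induction_on with
  | h0 => simp
  | hadd x y hx hy =>
      rw [mul_add, map_add, hx, hy, map_add, Finsupp.mapRange_add (fun _ _ => mul_add a _ _)]
  | hsingle b i =>
      rw [← mul_assoc, ← map_mul, coeff_C_mul_X_pow, coeff_C_mul_X_pow,
        Finsupp.mapRange_single]

lemma coeff_C_mul_apply (a : S) (z : R) (j : ℕ) :
    P.coeff (P.C a * z) j = a * P.coeff z j := by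
  rw [coeff_C_mul, Finsupp.mapRange_apply]

lemma coeff_X_mul (z : R) :
    P.coeff (P.X * z) = (P.coeff z).sum fun i a =>
      Finsupp.single (i + 1) (σ a) + Finsupp.single i (δ a) := by
  conv_lhs => rw [P.eq_sum z]
  rw [Finsupp.mul_sum, map_finsuppSum]
  refine Finsupp.sum_congr fun i _ => ?_
  rw [← mul_assoc, P.X_mul, add_mul, mul_assoc, ← pow_succ', map_add,
    coeff_C_mul_X_pow, coeff_C_mul_X_pow]

lemma eq_zero_iff_coeff (x : R) : x = 0 ↔ P.coeff x = 0 := by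
  constructor
  · rintro rfl; simp
  · intro h
    have := congrArg P.coeff.symm h
    simpa using this

lemma deg_lt_natCast {x : R} {n : ℕ} :
    P.deg x < (n : WithBot ℕ) ↔ ∀ i, n ≤ i → P.coeff x i = 0 := by
  unfold deg
  constructor
  · intro h i hi
    by_contra hne
    have hmem : i ∈ (P.coeff x).support := Finsupp.mem_support_iff.2 hne
    have h1 : (i : WithBot ℕ) ≤ (P.coeff x).support.max := Finset.le_max hmem
    have h2 : (i : WithBot ℕ) < (n : WithBot ℕ) := lt_of_le_of_lt h1 h
    exact absurd (by exact_mod_cast h2) (not_lt.2 hi)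
  · intro h
    rcases hmax : (P.coeff x).support.max with _ | a
    · rw [Nat.cast_withBot]
      exact WithBot.bot_lt_coe n
    · have ha : a ∈ (P.coeff x).support := Finset.mem_of_max hmax
      have hne := Finsupp.mem_support_iff.1 ha
      have : a < n := by
        by_contra hcon
        exact hne (h a (not_lt.1 hcon))
      rw [Nat.cast_withBot]
      exact WithBot.coe_lt_coe.2 this

lemma deg_eq_natCast {x : R} {n : ℕ} (hc : P.coeff x n ≠ 0)
    (hv : ∀ i, n < i → P.coeff x i = 0) : P.deg x = (n : WithBot ℕ) := by
  unfold deg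
  apply le_antisymm
  · refine Finset.max_le fun a ha => ?_
    have hne := Finsupp.mem_support_iff.1 ha
    have : a ≤ n := by
      by_contra hcon
      exact hne (hv a (not_le.1 hcon))
    rw [Nat.cast_withBot]
    exact WithBot.coe_le_coe.2 this
  · exact Finset.le_max (Finsupp.mem_support_iff.2 hc)

end SkewPolyRing
namespace SkewPolyRing

variable {S : Type*} [Ring S] {σ : S →+* S} {δ : S → S} {R : Type*} [Ring R]
  (P : SkewPolyRing S σ δ R)

lemma coeff_X_mul_apply (z : R) (j : ℕ) :
    P.coeff (P.X * z) j = (P.coeff z).sum fun i a =>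
      (Finsupp.single (i + 1) (σ a)) j + (Finsupp.single i (δ a)) j := by
  rw [coeff_X_mul, Finsupp.sum_apply]
  exact Finsupp.sum_congr fun i _ => by simp

lemma coeff_X_mul_high {z : R} {d : ℕ} (hz : ∀ j, d < j → P.coeff z j = 0) :
    (∀ j, d + 1 < j → P.coeff (P.X * z) j = 0) ∧
      P.coeff (P.X * z) (d + 1) = σ (P.coeff z d) := by
  have hsupp : ∀ i ∈ (P.coeff z).support, i ≤ d := by
    intro i hi
    by_contra hcon
    exact Finsupp.mem_support_iff.1 hi (hz i (not_le.1 hcon))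
  constructor
  · intro j hj
    rw [coeff_X_mul_apply, Finsupp.sum]
    refine Finset.sum_eq_zero fun i hi => ?_
    have hid := hsupp i hi
    simp only [Finsupp.single_apply]
    rw [if_neg (by omega), if_neg (by omega), add_zero]
  · rw [coeff_X_mul_apply, Finsupp.sum]
    by_cases hd : d ∈ (P.coeff z).support
    · rw [Finset.sum_eq_single_of_mem d hd]
      · simp only [Finsupp.single_apply, if_true]
        rw [if_neg (by omega), add_zero]
      · intro i hi hne
        have hid := hsupp i hi
        simp only [Finsupp.single_apply]
        rw [if_neg (by omega), if_neg (by omega), add_zero]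
    · have hzd : P.coeff z d = 0 := Finsupp.notMem_support_iff.1 hd
      rw [hzd, map_zero]
      refine Finset.sum_eq_zero fun i hi => ?_
      have hid := hsupp i hi
      have hine : i ≠ d := fun h => hd (h ▸ hi)
      simp only [Finsupp.single_apply]
      rw [if_neg (by omega), if_neg (by omega), add_zero]

variable {f : R} {m : ℕ}

lemma coeff_X_pow_mul_f (hfm : P.coeff f m = 1) (hfh : ∀ i, m < i → P.coeff f i = 0)
    (k : ℕ) :
    (∀ j, k + m < j → P.coeff (P.X ^ k * f) j = 0) ∧ P.coeff (P.X ^ k * f) (k + m) = 1 := by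
  induction k with
  | zero => simpa using ⟨hfh, hfm⟩
  | succ k ih =>
      have h1 : P.X ^ (k + 1) * f = P.X * (P.X ^ k * f) := by
        rw [pow_succ', mul_assoc]
      have h2 := P.coeff_X_mul_high (z := P.X ^ k * f) (d := k + m) ih.1
      constructor
      · intro j hj
        rw [h1]
        have : k + m + 1 < j := by omega
        exact h2.1 j this
      · rw [h1]
        have : k + 1 + m = (k + m) + 1 := by omega
        rw [this, h2.2, ih.2, map_one]

lemma coeff_mul_f (hfm : P.coeff f m = 1) (hfh : ∀ i, m < i → P.coeff f i = 0)
    {q : R} {d : ℕ} (hq : ∀ i, d < i → P.coeff q i = 0) :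
    P.coeff (q * f) (d + m) = P.coeff q d ∧ ∀ j, d + m < j → P.coeff (q * f) j = 0 := by
  have hrep : q * f = (P.coeff q).sum fun i a => P.C a * (P.X ^ i * f) := by
    conv_lhs => rw [P.eq_sum q]
    rw [Finsupp.sum_mul]
    exact Finsupp.sum_congr fun i _ => (mul_assoc _ _ _)
  have hco : ∀ j, P.coeff (q * f) j =
      ∑ i ∈ (P.coeff q).support, P.coeff q i * P.coeff (P.X ^ i * f) j := by
    intro j
    rw [hrep, map_finsuppSum, Finsupp.sum_apply, Finsupp.sum]
    exact Finset.sum_congr rfl fun i _ => by rw [coeff_C_mul_apply]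
  have hsupp : ∀ i ∈ (P.coeff q).support, i ≤ d := by
    intro i hi
    by_contra hcon
    exact Finsupp.mem_support_iff.1 hi (hq i (not_le.1 hcon))
  have hX := P.coeff_X_pow_mul_f hfm hfh
  constructor
  · rw [hco]
    by_cases hd : d ∈ (P.coeff q).support
    · rw [Finset.sum_eq_single_of_mem d hd]
      · rw [(hX d).2]
        rw [mul_one]
      · intro i hi hne
        have hid := hsupp i hi
        rw [(hX i).1 (d + m) (by omega), mul_zero]
    · have hqd : P.coeff q d = 0 := Finsupp.notMem_support_iff.1 hd
      rw [hqd]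
      refine Finset.sum_eq_zero fun i hi => ?_
      have hid := hsupp i hi
      have hine : i ≠ d := fun h => hd (h ▸ hi)
      rw [(hX i).1 (d + m) (by omega), mul_zero]
  · intro j hj
    rw [hco]
    refine Finset.sum_eq_zero fun i hi => ?_
    have hid := hsupp i hi
    rw [(hX i).1 j (by omega), mul_zero]

lemma remainder_unique (hfm : P.coeff f m = 1) (hfh : ∀ i, m < i → P.coeff f i = 0)
    {q₁ r₁ q₂ r₂ : R} (h : q₁ * f + r₁ = q₂ * f + r₂)
    (hr₁ : ∀ i, m ≤ i → P.coeff r₁ i = 0) (hr₂ : ∀ i, m ≤ i → P.coeff r₂ i = 0) :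
    r₁ = r₂ := by
  have key : (q₁ - q₂) * f = r₂ - r₁ := by
    rw [sub_mul, sub_eq_sub_iff_add_eq_add, h, add_comm]
  by_cases hq : q₁ - q₂ = 0
  · have h0 : r₂ - r₁ = 0 := by rw [← key, hq, zero_mul]
    exact (sub_eq_zero.1 h0).symm
  · exfalso
    have hs : ((P.coeff (q₁ - q₂)).support).Nonempty := by
      rw [Finsupp.support_nonempty_iff]
      intro hc
      exact hq ((P.eq_zero_iff_coeff _).2 hc)
    set d := (P.coeff (q₁ - q₂)).support.max' hs with hd
    have hdm : P.coeff (q₁ - q₂) d ≠ 0 :=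
      Finsupp.mem_support_iff.1 ((P.coeff (q₁ - q₂)).support.max'_mem hs)
    have hdh : ∀ i, d < i → P.coeff (q₁ - q₂) i = 0 := by
      intro i hi
      by_contra hcon
      have := Finset.le_max' _ i (Finsupp.mem_support_iff.2 hcon)
      omega
    have htop := (P.coeff_mul_f hfm hfh hdh).1
    rw [key] at htop
    have : P.coeff (r₂ - r₁) (d + m) = 0 := by
      rw [map_sub, Finsupp.sub_apply, hr₂ _ (by omega), hr₁ _ (by omega), sub_zero]
    exact hdm (by rw [← htop, this])

end SkewPolyRing
namespace SkewPolyRing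

variable {S : Type*} [Ring S] {σ : S →+* S} {δ : S → S} {R : Type*} [Ring R]
  (P : SkewPolyRing S σ δ R)

variable {f : R} {m : ℕ}

lemma div_exists_aux (hfm : P.coeff f m = 1) (hfh : ∀ i, m < i → P.coeff f i = 0)
    (pI : S → Prop) (pIsub : ∀ a b, pI a → pI b → pI (a - b))
    (pImul : ∀ a s, pI a → pI (a * s)) (n : ℕ) :
    ∀ g : R, (∀ i, n ≤ i → P.coeff g i = 0) →
      ∃ q r : R, g = q * f + r ∧ (∀ i, m ≤ i → P.coeff r i = 0) ∧
        ((∀ i, pI (P.coeff g i)) → ∀ i, pI (P.coeff r i)) := by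
  induction n with
  | zero =>
      intro g hg
      exact ⟨0, g, by rw [zero_mul, zero_add], fun i hi => hg i (Nat.zero_le i),
        fun h i => h i⟩
  | succ n ih =>
      intro g hg
      by_cases hmn : n < m
      · refine ⟨0, g, by rw [zero_mul, zero_add], fun i hi => hg i (by omega),
          fun h i => h i⟩
      · have hmn' : m ≤ n := not_lt.1 hmn
        set k := n - m with hk
        have hkm : k + m = n := by omega
        set a := P.coeff g n with ha
        set g' := g - P.C a * (P.X ^ k * f) with hg'
        have hXf := P.coeff_X_pow_mul_f hfm hfh k
        have hco : ∀ i, P.coeff g' i = P.coeff g i - a * P.coeff (P.X ^ k * f) i := by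
          intro i
          rw [hg', map_sub, Finsupp.sub_apply, coeff_C_mul_apply]
        have hg'h : ∀ i, n ≤ i → P.coeff g' i = 0 := by
          intro i hi
          rcases eq_or_lt_of_le hi with h | h
          · have h2 : P.coeff (P.X ^ k * f) n = 1 := by rw [← hkm]; exact hXf.2
            rw [hco, ← h, ← ha, h2, mul_one, sub_self]
          · rw [hco, hg i (by omega), hXf.1 i (by omega), mul_zero, sub_zero]
        obtain ⟨q', r', hqr', hr', hpI'⟩ := ih g' hg'h
        refine ⟨q' + P.C a * P.X ^ k, r', ?_, hr', ?_⟩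
        · rw [add_mul, mul_assoc]
          rw [hg'] at hqr'
          rw [← sub_eq_iff_eq_add'] at hqr' ⊢
          rw [← hqr']
          abel
        · intro hgI
          refine hpI' fun i => ?_
          rw [hco]
          exact pIsub _ _ (hgI i) (pImul _ _ (hgI n))

lemma coeff_bound (g : R) : ∀ i, ((P.coeff g).support.sup id + 1) ≤ i → P.coeff g i = 0 := by
  intro i hi
  by_contra hne
  have := Finset.le_sup (f := id) (Finsupp.mem_support_iff.2 hne)
  simp only [id] at this
  omega

lemma div_exists (hfm : P.coeff f m = 1) (hfh : ∀ i, m < i → P.coeff f i = 0)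
    (pI : S → Prop) (pIsub : ∀ a b, pI a → pI b → pI (a - b))
    (pImul : ∀ a s, pI a → pI (a * s)) (g : R) :
    ∃ q r : R, g = q * f + r ∧ (∀ i, m ≤ i → P.coeff r i = 0) ∧
      ((∀ i, pI (P.coeff g i)) → ∀ i, pI (P.coeff r i)) :=
  P.div_exists_aux hfm hfh pI pIsub pImul _ g (P.coeff_bound g)

lemma modr_eq (hdeg : P.deg f = (m : WithBot ℕ)) (hfm : P.coeff f m = 1)
    (hfh : ∀ i, m < i → P.coeff f i = 0) {g q r : R} (hg : g = q * f + r)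
    (hr : ∀ i, m ≤ i → P.coeff r i = 0) : P.modr f g = r := by
  have hex : ∃ qr : R × R, g = qr.1 * f + qr.2 ∧ P.deg qr.2 < P.deg f :=
    ⟨(q, r), hg, by rw [hdeg]; exact P.deg_lt_natCast.2 hr⟩
  rw [modr, dif_pos hex]
  obtain ⟨hspec1, hspec2⟩ := Classical.choose_spec hex
  have hspec2' := lt_of_lt_of_eq hspec2 hdeg
  have heq : (Classical.choose hex).1 * f + (Classical.choose hex).2 = q * f + r := by
    rw [← hspec1, hg]
  exact P.remainder_unique hfm hfh heq (P.deg_lt_natCast.1 hspec2') hr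

end SkewPolyRing
namespace SkewPolyRing

section Jideal
set_option linter.unusedSectionVars false

variable {S : Type*} [Ring S] {σ : S →+* S} {δ : S → S} {R : Type*} [Ring R]
  (P : SkewPolyRing S σ δ R)
  (pI : S → Prop) (pI0 : pI 0) (pIadd : ∀ a b, pI a → pI b → pI (a + b))
  (pImull : ∀ s a, pI a → pI (s * a)) (pImulr : ∀ a s, pI a → pI (a * s))
  (pIσ : ∀ a, pI a → pI (σ a)) (pIδ : ∀ a, pI a → pI (δ a))



include pI0 pIadd in
lemma J_add {x y : R} (hx : (fun z : R => ∀ i : ℕ, pI (P.coeff z i)) x) (hy : (fun z : R => ∀ i : ℕ, pI (P.coeff z i)) y) : (fun z : R => ∀ i : ℕ, pI (P.coeff z i)) (x + y) := by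
  intro i
  rw [map_add, Finsupp.add_apply]
  exact pIadd _ _ (hx i) (hy i)

include pI0 in
lemma J_zero : (fun z : R => ∀ i : ℕ, pI (P.coeff z i)) (0 : R) := by intro i; simp [pI0]

include pImull in
lemma J_C_mul {z : R} (a : S) (hz : (fun z : R => ∀ i : ℕ, pI (P.coeff z i)) z) : (fun z : R => ∀ i : ℕ, pI (P.coeff z i)) (P.C a * z) := by
  intro i
  rw [coeff_C_mul_apply]
  exact pImull _ _ (hz i)

include pI0 pIadd pIσ pIδ in
lemma J_X_mul {z : R} (hz : (fun z : R => ∀ i : ℕ, pI (P.coeff z i)) z) : (fun z : R => ∀ i : ℕ, pI (P.coeff z i)) (P.X * z) := by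
  intro j
  rw [coeff_X_mul_apply, Finsupp.sum]
  refine Finset.sum_induction _ pI (pIadd · ·) pI0 fun i _ => ?_
  simp only [Finsupp.single_apply]
  refine pIadd _ _ ?_ ?_
  · split
    · exact pIσ _ (hz i)
    · exact pI0
  · split
    · exact pIδ _ (hz i)
    · exact pI0

include pI0 pIadd pIσ pIδ pImull in
lemma J_X_pow_mul {z : R} (k : ℕ) (hz : (fun z : R => ∀ i : ℕ, pI (P.coeff z i)) z) : (fun z : R => ∀ i : ℕ, pI (P.coeff z i)) (P.X ^ k * z) := by
  induction k with
  | zero => simpa using hz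
  | succ k ih =>
      have : P.X ^ (k + 1) * z = P.X * (P.X ^ k * z) := by rw [pow_succ', mul_assoc]
      rw [this]
      exact P.J_X_mul pI pI0 pIadd pIσ pIδ ih

include pI0 pIadd pIσ pIδ pImull in
lemma J_mul_left {z : R} (x : R) (hz : (fun z : R => ∀ i : ℕ, pI (P.coeff z i)) z) : (fun z : R => ∀ i : ℕ, pI (P.coeff z i)) (x * z) := by
  induction x using P.induction_on with
  | h0 => simpa using P.J_zero pI pI0
  | hadd x y hx hy =>
      have : (x + y) * z = x * z + y * z := add_mul x y z
      rw [this]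
      exact P.J_add pI pI0 pIadd hx hy
  | hsingle a i =>
      rw [mul_assoc]
      exact P.J_C_mul pI pImull a (P.J_X_pow_mul pI pI0 pIadd pImull pIσ pIδ i hz)

include pI0 pIadd pImulr in
lemma J_mul_right {z : R} (x : R) (hz : (fun z : R => ∀ i : ℕ, pI (P.coeff z i)) z) : (fun z : R => ∀ i : ℕ, pI (P.coeff z i)) (z * x) := by
  induction x using P.induction_on with
  | h0 => simpa using P.J_zero pI pI0
  | hadd x y hx hy =>
      rw [mul_add]
      exact P.J_add pI pI0 pIadd hx hy
  | hsingle a i =>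
      -- z * (C a * X ^ i) = (z * C a) * X ^ i
      rw [← mul_assoc]
      -- first : (fun z : R => ∀ i : ℕ, pI (P.coeff z i)) (z * C a)
      have h1 : (fun z : R => ∀ i : ℕ, pI (P.coeff z i)) (z * P.C a) := by
        intro j
        have hrep : z * P.C a = (P.coeff z).sum fun i b => P.C b * (P.X ^ i * P.C a) := by
          conv_lhs => rw [P.eq_sum z]
          rw [Finsupp.sum_mul]
          exact Finsupp.sum_congr fun i _ => mul_assoc _ _ _
        rw [hrep, map_finsuppSum, Finsupp.sum_apply, Finsupp.sum]
        refine Finset.sum_induction _ pI (pIadd · ·) pI0 fun i hi => ?_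
        rw [coeff_C_mul_apply]
        exact pImulr _ _ (hz i)
      -- then multiply by X ^ i on the right
      clear hz
      induction i with
      | zero => simpa using h1
      | succ i ih =>
          have : z * P.C a * P.X ^ (i + 1) = (z * P.C a * P.X ^ i) * P.X := by
            rw [pow_succ]; exact (mul_assoc _ _ _).symm
          rw [this]
          set w := z * P.C a * P.X ^ i with hw
          intro j
          have hrep : w * P.X = (P.coeff w).sum fun i b => P.C b * P.X ^ (i + 1) := by
            conv_lhs => rw [P.eq_sum w]
            rw [Finsupp.sum_mul]
            exact Finsupp.sum_congr fun i _ => by rw [mul_assoc, ← pow_succ]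
          rw [hrep, map_finsuppSum, Finsupp.sum_apply, Finsupp.sum]
          refine Finset.sum_induction _ pI (pIadd · ·) pI0 fun l hl => ?_
          rw [coeff_C_mul_X_pow]
          simp only [Finsupp.single_apply]
          split
          · exact ih l
          · exact pI0

end Jideal

end SkewPolyRing
/-- `δ` is a left `σ`-derivation of `S`. -/
def IsLeftSigmaDerivation {S : Type*} [Ring S] (σ : S →+* S) (δ : S → S) : Prop :=
  (∀ a b : S, δ (a + b) = δ a + δ b) ∧ ∀ a b : S, δ (a * b) = σ a * δ b + δ a * b

/-- Coefficient-wise reduction of skew polynomials along a ring homomorphism `π`. -/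
noncomputable def SkewPolyRing.red {S T R R' : Type*} [Ring S] [Ring T] [Ring R] [Ring R']
    {σ₁ : S →+* S} {δ₁ : S → S} {σ₂ : T →+* T} {δ₂ : T → T}
    (P : SkewPolyRing S σ₁ δ₁ R) (Q : SkewPolyRing T σ₂ δ₂ R')
    (π : S →+* T) (x : R) : R' :=
  Q.coeff.symm (Finsupp.mapRange π (map_zero π) (P.coeff x))

open scoped NumberField

set_option synthInstance.maxHeartbeats 800000
set_option maxHeartbeats 1600000
namespace SkewPolyRing

section Red

variable {S T R R' : Type*} [Ring S] [Ring T] [Ring R] [Ring R']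
  {σ₁ : S →+* S} {δ₁ : S → S} {σ₂ : T →+* T} {δ₂ : T → T}
  (P : SkewPolyRing S σ₁ δ₁ R) (Q : SkewPolyRing T σ₂ δ₂ R')
  (π : S →+* T)

lemma red_coeff (x : R) :
    Q.coeff (P.red Q π x) = Finsupp.mapRange π (map_zero π) (P.coeff x) := by
  rw [SkewPolyRing.red, AddEquiv.apply_symm_apply]

lemma red_coeff_apply (x : R) (i : ℕ) :
    Q.coeff (P.red Q π x) i = π (P.coeff x i) := by
  rw [red_coeff, Finsupp.mapRange_apply]

lemma red_add (x y : R) : P.red Q π (x + y) = P.red Q π x + P.red Q π y := by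
  unfold SkewPolyRing.red
  rw [map_add, Finsupp.mapRange_add (map_add π), map_add]

lemma red_zero : P.red Q π (0 : R) = 0 := by
  unfold SkewPolyRing.red
  simp

lemma red_single (a : S) (i : ℕ) :
    P.red Q π (P.C a * P.X ^ i) = Q.C (π a) * Q.X ^ i := by
  unfold SkewPolyRing.red
  rw [coeff_C_mul_X_pow, Finsupp.mapRange_single, coeff_symm_single]

lemma red_one : P.red Q π (1 : R) = 1 := by
  have h : (1 : R) = P.C 1 * P.X ^ 0 := by simp
  rw [h, red_single]
  simp

variable (hσ : ∀ a : S, π (σ₁ a) = σ₂ (π a)) (hδ : ∀ a : S, π (δ₁ a) = δ₂ (π a))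

include hσ hδ in
lemma red_X_mul (z : R) : P.red Q π (P.X * z) = Q.X * P.red Q π z := by
  induction z using P.induction_on with
  | h0 => simp [red_zero]
  | hadd x y hx hy => rw [mul_add, red_add, red_add, mul_add, hx, hy]
  | hsingle a i =>
      rw [red_single, ← mul_assoc, ← mul_assoc, P.X_mul, Q.X_mul, add_mul, add_mul,
        red_add, mul_assoc, mul_assoc, ← pow_succ', ← pow_succ', red_single, red_single,
        hσ, hδ]

include hσ hδ in
lemma red_X_pow_mul (k : ℕ) (z : R) :
    P.red Q π (P.X ^ k * z) = Q.X ^ k * P.red Q π z := by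
  induction k with
  | zero => simp
  | succ k ih =>
      rw [pow_succ', mul_assoc, red_X_mul P Q π hσ hδ, ih, pow_succ', mul_assoc]

lemma red_C_mul (a : S) (z : R) :
    P.red Q π (P.C a * z) = Q.C (π a) * P.red Q π z := by
  induction z using P.induction_on with
  | h0 => simp [red_zero]
  | hadd x y hx hy => rw [mul_add, red_add, red_add, mul_add, hx, hy]
  | hsingle b i =>
      rw [← mul_assoc, ← map_mul, red_single, red_single, map_mul, Q.C.map_mul, mul_assoc]

include hσ hδ in
lemma red_mul (x z : R) : P.red Q π (x * z) = P.red Q π x * P.red Q π z := by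
  induction x using P.induction_on with
  | h0 => simp [red_zero]
  | hadd x y hx hy => rw [add_mul, red_add, red_add, add_mul, hx, hy]
  | hsingle a i =>
      rw [mul_assoc, red_C_mul, red_X_pow_mul P Q π hσ hδ, red_single, mul_assoc]

end Red

end SkewPolyRing
/-- (the coefficient-wise reduction map
`Ψ : Λ → S_f̄ = (O_K/𝔭O_K)[t;σ̄,δ̄]/(O_K/𝔭O_K)[t;σ̄,δ̄]f̄` is a surjective unital
homomorphism of nonassociative rings with kernel `𝔭Λ`, hence induces an
isomorphism `Λ/𝔭Λ ≅ S_f̄`). -/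
theorem natural_order_quotient_iso
    (F K : Type*) [Field F] [Field K] [NumberField F] [NumberField K]
    [Algebra F K] [IsGalois F K] (σ : K ≃ₐ[F] K)
    (𝔭 : Ideal (𝓞 F)) [𝔭.IsPrime] (h𝔭 : 𝔭 ≠ ⊥)
    (pK : Ideal (𝓞 K)) (hpK : pK = Ideal.map (algebraMap (𝓞 F) (𝓞 K)) 𝔭)
    -- the restriction σ₀ of σ to O_K and the induced automorphism σ̄ of O_K/𝔭O_K
    (σ₀ : 𝓞 K →+* 𝓞 K)
    (hσ₀ : ∀ x : 𝓞 K, algebraMap (𝓞 K) K (σ₀ x) = σ (algebraMap (𝓞 K) K x))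
    (σb : (𝓞 K ⧸ pK) →+* (𝓞 K ⧸ pK))
    (hσb : ∀ x : 𝓞 K, σb (Ideal.Quotient.mk pK x) = Ideal.Quotient.mk pK (σ₀ x))
    -- an F-linear left σ-derivation δ preserving O_K, its restriction δ₀,
    -- and the induced left σ̄-derivation δ̄ of O_K/𝔭O_K
    (δ : K → K)
    (hadd : ∀ a b : K, δ (a + b) = δ a + δ b)
    (hlin : ∀ (c : F) (a : K), δ (algebraMap F K c * a) = algebraMap F K c * δ a)
    (hleib : ∀ a b : K, δ (a * b) = σ a * δ b + δ a * b)
    (δ₀ : 𝓞 K → 𝓞 K)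
    (hδ₀ : ∀ x : 𝓞 K, algebraMap (𝓞 K) K (δ₀ x) = δ (algebraMap (𝓞 K) K x))
    (δb : (𝓞 K ⧸ pK) → (𝓞 K ⧸ pK))
    (hδb : ∀ x : 𝓞 K, δb (Ideal.Quotient.mk pK x) = Ideal.Quotient.mk pK (δ₀ x))
    -- Λ is (the set of elements of degree < m of) O_K[t;σ,δ]/O_K[t;σ,δ]f
    {R R' : Type*} [Ring R] [Ring R']
    (P : SkewPolyRing (𝓞 K) σ₀ δ₀ R)
    (Q : SkewPolyRing (𝓞 K ⧸ pK) σb δb R')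
    (f : R) (m : ℕ) (hm : 1 ≤ m) (hf : P.Monic f m)
    (Λ : Set R) (hΛ : Λ = {x : R | P.deg x < (m : WithBot ℕ)})
    (pΛ : Set R)
    (hpΛ : pΛ = {x : R | P.deg x < (m : WithBot ℕ) ∧ ∀ i : ℕ, P.coeff x i ∈ pK})
    (Ψ : R → R') (hΨ : Ψ = SkewPolyRing.red P Q (Ideal.Quotient.mk pK)) :
    -- Ψ is additive and unital
    (∀ x y : R, Ψ (x + y) = Ψ x + Ψ y) ∧ Ψ (1 : R) = 1 ∧
    -- Ψ is multiplicative from S_f to S_f̄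
    (∀ x ∈ Λ, ∀ y ∈ Λ, Ψ (P.pmul f x y) = Q.pmul (Ψ f) (Ψ x) (Ψ y)) ∧
    -- Ψ maps Λ onto S_f̄
    (∀ y : R', Q.deg y < (m : WithBot ℕ) → ∃ x ∈ Λ, Ψ x = y) ∧
    -- the kernel of Ψ on Λ is 𝔭Λ = {∑ aᵢtⁱ : aᵢ ∈ 𝔭O_K}
    (∀ x ∈ Λ, (Ψ x = 0 ↔ x ∈ pΛ)) ∧
    -- 𝔭Λ is a two-sided ideal of Λ
    ((∀ x ∈ pΛ, ∀ y ∈ pΛ, x - y ∈ pΛ) ∧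
      ∀ a ∈ Λ, ∀ x ∈ pΛ, P.pmul f a x ∈ pΛ ∧ P.pmul f x a ∈ pΛ) := by
  classical
  subst hΛ hpΛ hΨ
  set π : 𝓞 K →+* (𝓞 K ⧸ pK) := Ideal.Quotient.mk pK with hπ
  have injK : Function.Injective (algebraMap (𝓞 K) K) :=
    NumberField.RingOfIntegers.coe_injective
  -- δ kills 0 and 1
  have hδ0K : δ (0 : K) = 0 := by
    have h := hadd 0 0
    rw [add_zero] at h
    exact right_eq_add.1 h
  have hδ1K : δ (1 : K) = 0 := by
    have h := hleib 1 1
    simp only [mul_one, one_mul, map_one] at h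
    exact right_eq_add.1 h
  -- δ₀ is additive and satisfies the Leibniz rule
  have hδ₀add : ∀ a b : 𝓞 K, δ₀ (a + b) = δ₀ a + δ₀ b := by
    intro a b
    apply injK
    rw [map_add, hδ₀, hδ₀, hδ₀, map_add, hadd]
  have hδ₀leib : ∀ a b : 𝓞 K, δ₀ (a * b) = σ₀ a * δ₀ b + δ₀ a * b := by
    intro a b
    apply injK
    rw [hδ₀, map_mul, hleib, map_add, map_mul, map_mul, hσ₀, hδ₀, hδ₀]
  -- σ₀ fixes the image of 𝓞 F
  have hσfix : ∀ p : 𝓞 F, σ₀ (algebraMap (𝓞 F) (𝓞 K) p) = algebraMap (𝓞 F) (𝓞 K) p := by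
    intro p
    apply injK
    rw [hσ₀]
    have h1 : algebraMap (𝓞 K) K (algebraMap (𝓞 F) (𝓞 K) p)
        = algebraMap F K (algebraMap (𝓞 F) F p) := by
      rw [← IsScalarTower.algebraMap_apply (𝓞 F) (𝓞 K) K,
        IsScalarTower.algebraMap_apply (𝓞 F) F K]
    rw [h1, AlgEquiv.commutes]
  -- δ₀ kills the image of 𝓞 F
  have hδfix : ∀ p : 𝓞 F, δ₀ (algebraMap (𝓞 F) (𝓞 K) p) = 0 := by
    intro p
    apply injK
    rw [hδ₀, map_zero]
    have h1 : algebraMap (𝓞 K) K (algebraMap (𝓞 F) (𝓞 K) p)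
        = algebraMap F K (algebraMap (𝓞 F) F p) * 1 := by
      rw [mul_one, ← IsScalarTower.algebraMap_apply (𝓞 F) (𝓞 K) K,
        IsScalarTower.algebraMap_apply (𝓞 F) F K]
    rw [h1, hlin, hδ1K, mul_zero]
  -- pK is stable under σ₀
  have σstab : ∀ a ∈ pK, σ₀ a ∈ pK := by
    intro a ha
    rw [hpK] at ha ⊢
    revert ha
    have hspan : Ideal.map (algebraMap (𝓞 F) (𝓞 K)) 𝔭
        = Ideal.span ((algebraMap (𝓞 F) (𝓞 K)) '' 𝔭) := rfl
    rw [hspan]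
    intro ha
    refine Submodule.span_induction (p := fun x _ => σ₀ x ∈ Ideal.span ((algebraMap (𝓞 F) (𝓞 K)) '' 𝔭))
      ?_ ?_ ?_ ?_ ha
    · rintro x ⟨p, hp, rfl⟩
      rw [hσfix]
      exact Ideal.subset_span ⟨p, hp, rfl⟩
    · show σ₀ 0 ∈ Ideal.span _
      rw [map_zero]; exact zero_mem _
    · intro x y _ _ hx hy
      rw [map_add]; exact add_mem hx hy
    · intro c x _ hx
      rw [smul_eq_mul, map_mul]
      exact Ideal.mul_mem_left _ _ hx
  -- pK is stable under δ₀
  have δstab : ∀ a ∈ pK, δ₀ a ∈ pK := by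
    intro a ha
    have hspan : Ideal.map (algebraMap (𝓞 F) (𝓞 K)) 𝔭
        = Ideal.span ((algebraMap (𝓞 F) (𝓞 K)) '' 𝔭) := rfl
    rw [hpK] at ha
    rw [hspan] at ha
    have key : δ₀ a ∈ Ideal.span ((algebraMap (𝓞 F) (𝓞 K)) '' 𝔭) := by
      refine Submodule.span_induction
        (p := fun x _ => δ₀ x ∈ Ideal.span ((algebraMap (𝓞 F) (𝓞 K)) '' 𝔭)) ?_ ?_ ?_ ?_ ha
      · rintro x ⟨p, hp, rfl⟩
        rw [hδfix]
        exact zero_mem _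
      · show δ₀ 0 ∈ Ideal.span _
        have h0 : δ₀ (0 : 𝓞 K) = 0 := by
          apply injK
          rw [hδ₀, map_zero, hδ0K]
        rw [h0]; exact zero_mem _
      · intro x y _ _ hx hy
        rw [hδ₀add]; exact add_mem hx hy
      · intro c x hxmem hx
        rw [smul_eq_mul, hδ₀leib]
        exact add_mem (Ideal.mul_mem_left _ _ hx) (Ideal.mul_mem_left _ _ hxmem)
    rw [hpK, hspan]
    exact key
  -- 1 ∉ pK
  have hone : (1 : 𝓞 K) ∉ pK := by
    have hcomap : Ideal.comap (algebraMap (𝓞 F) (𝓞 K)) (⊥ : Ideal (𝓞 K)) ≤ 𝔭 := by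
      intro x hx
      rw [Ideal.mem_comap, Ideal.mem_bot] at hx
      have : x = 0 := by
        apply NumberField.RingOfIntegers.algebraMap.injective F K
        rw [hx, map_zero]
      rw [this]; exact zero_mem _
    obtain ⟨Q', hQ'ge, hQ'prime, hQ'comap⟩ :=
      Ideal.exists_ideal_over_prime_of_isIntegral 𝔭 (⊥ : Ideal (𝓞 K)) hcomap
    intro h1
    have hle : pK ≤ Q' := by
      rw [hpK]
      exact Ideal.map_le_iff_le_comap.2 hQ'comap.ge
    exact hQ'prime.ne_top (Ideal.eq_top_iff_one Q' |>.2 (hle h1))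
  have hzero_ne_one : (1 : 𝓞 K ⧸ pK) ≠ 0 := by
    intro h
    have : (1 : 𝓞 K) ∈ pK := Ideal.Quotient.eq_zero_iff_mem.1 (by
      rw [map_one]; exact h)
    exact hone this
  -- compatibility of π with σ and δ
  have πσ : ∀ a : 𝓞 K, π (σ₀ a) = σb (π a) := fun a => (hσb a).symm
  have πδ : ∀ a : 𝓞 K, π (δ₀ a) = δb (π a) := fun a => (hδb a).symm
  -- data from monicity of f
  obtain ⟨hdeg, hfm⟩ := hf
  have hfh : ∀ i, m < i → P.coeff f i = 0 := by
    intro i hi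
    have hlt : P.deg f < ((m + 1 : ℕ) : WithBot ℕ) := by
      rw [hdeg, Nat.cast_withBot, Nat.cast_withBot]
      exact WithBot.coe_lt_coe.2 (Nat.lt_succ_self m)
    exact P.deg_lt_natCast.1 hlt i (by omega)
  -- data for the reduction of f
  have hfmQ : Q.coeff (P.red Q π f) m = 1 := by
    rw [P.red_coeff_apply Q π, hfm, map_one]
  have hfhQ : ∀ i, m < i → Q.coeff (P.red Q π f) i = 0 := by
    intro i hi
    rw [P.red_coeff_apply Q π, hfh i hi, map_zero]
  have hdegQ : Q.deg (P.red Q π f) = (m : WithBot ℕ) :=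
    Q.deg_eq_natCast (by rw [hfmQ]; exact hzero_ne_one) hfhQ
  refine ⟨?_, ?_, ?_, ?_, ?_, ?_, ?_⟩
  -- (1) additive
  · exact fun x y => P.red_add Q π x y
  -- (2) unital
  · exact P.red_one Q π
  -- (3) multiplicative
  · intro x _ y _
    obtain ⟨q, r, hqr, hrlt, -⟩ := P.div_exists hfm hfh (fun _ => True)
      (fun _ _ _ _ => trivial) (fun _ _ _ => trivial) (x * y)
    have h1 : P.pmul f x y = r := P.modr_eq hdeg hfm hfh hqr hrlt
    have hrltQ : ∀ i, m ≤ i → Q.coeff (P.red Q π r) i = 0 := by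
      intro i hi
      rw [P.red_coeff_apply Q π, hrlt i hi, map_zero]
    have hgq : P.red Q π x * P.red Q π y = P.red Q π q * P.red Q π f + P.red Q π r := by
      rw [← P.red_mul Q π πσ πδ, hqr, P.red_add Q π, P.red_mul Q π πσ πδ]
    have h2 : Q.pmul (P.red Q π f) (P.red Q π x) (P.red Q π y) = P.red Q π r :=
      Q.modr_eq hdegQ hfmQ hfhQ hgq hrltQ
    rw [h1, h2]
  -- (4) surjectivity
  · intro y hy
    set lift : (𝓞 K ⧸ pK) → 𝓞 K := fun b =>
      if hb : b = 0 then 0 else Classical.choose (Ideal.Quotient.mk_surjective b) with hliftdef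
    have hlift0 : lift 0 = 0 := dif_pos rfl
    have hliftπ : ∀ b, π (lift b) = b := by
      intro b
      by_cases hb : b = 0
      · rw [hb, hlift0, map_zero]
      · rw [hliftdef]
        simp only [dif_neg hb]
        exact Classical.choose_spec (Ideal.Quotient.mk_surjective b)
    set x : R := P.coeff.symm (Finsupp.mapRange lift hlift0 (Q.coeff y)) with hx
    have hcx : P.coeff x = Finsupp.mapRange lift hlift0 (Q.coeff y) := by
      rw [hx, AddEquiv.apply_symm_apply]
    have hyc : ∀ i, m ≤ i → Q.coeff y i = 0 := Q.deg_lt_natCast.1 hy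
    refine ⟨x, ?_, ?_⟩
    · show P.deg x < (m : WithBot ℕ)
      refine P.deg_lt_natCast.2 fun i hi => ?_
      rw [hcx, Finsupp.mapRange_apply, hyc i hi, hlift0]
    · apply Q.coeff.injective
      ext i
      rw [P.red_coeff_apply Q π, hcx, Finsupp.mapRange_apply, hliftπ]
  -- (5) kernel
  · intro x hx
    constructor
    · intro h0
      refine ⟨hx, fun i => ?_⟩
      have : π (P.coeff x i) = 0 := by
        rw [← P.red_coeff_apply Q π, h0, map_zero]
        simp
      exact Ideal.Quotient.eq_zero_iff_mem.1 this
    · rintro ⟨-, hmem⟩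
      apply (Q.eq_zero_iff_coeff _).2
      ext i
      rw [P.red_coeff_apply Q π]
      simp only [Finsupp.coe_zero, Pi.zero_apply]
      exact Ideal.Quotient.eq_zero_iff_mem.2 (hmem i)
  -- (6a) closed under subtraction
  · rintro x ⟨hdx, hcx⟩ y ⟨hdy, hcy⟩
    constructor
    · refine P.deg_lt_natCast.2 fun i hi => ?_
      rw [map_sub, Finsupp.sub_apply, P.deg_lt_natCast.1 hdx i hi,
        P.deg_lt_natCast.1 hdy i hi, sub_zero]
    · intro i
      rw [map_sub, Finsupp.sub_apply]
      exact sub_mem (hcx i) (hcy i)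
  -- (6b) two-sided ideal under pmul
  · rintro a _ x ⟨-, hcx⟩
    have pI0 : (0 : 𝓞 K) ∈ pK := zero_mem _
    have pIadd : ∀ u v : 𝓞 K, u ∈ pK → v ∈ pK → u + v ∈ pK := fun u v hu hv => add_mem hu hv
    have pIsub : ∀ u v : 𝓞 K, u ∈ pK → v ∈ pK → u - v ∈ pK := fun u v hu hv => sub_mem hu hv
    have pImull : ∀ s u : 𝓞 K, u ∈ pK → s * u ∈ pK := fun s u hu => Ideal.mul_mem_left _ s hu
    have pImulr : ∀ u s : 𝓞 K, u ∈ pK → u * s ∈ pK := fun u s hu => Ideal.mul_mem_right s _ hu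
    constructor
    · -- a * x
      have hax : ∀ i, P.coeff (a * x) i ∈ pK :=
        P.J_mul_left (· ∈ pK) pI0 pIadd pImull σstab δstab a hcx
      obtain ⟨q, r, hqr, hrlt, hrI⟩ := P.div_exists hfm hfh (· ∈ pK) pIsub pImulr (a * x)
      have h1 : P.pmul f a x = r := P.modr_eq hdeg hfm hfh hqr hrlt
      rw [h1]
      exact ⟨P.deg_lt_natCast.2 hrlt, hrI hax⟩
    · -- x * a
      have hax : ∀ i, P.coeff (x * a) i ∈ pK :=
        P.J_mul_right (· ∈ pK) pI0 pIadd pImulr a hcx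
      obtain ⟨q, r, hqr, hrlt, hrI⟩ := P.div_exists hfm hfh (· ∈ pK) pIsub pImulr (x * a)
      have h1 : P.pmul f x a = r := P.modr_eq hdeg hfm hfh hqr hrlt
      rw [h1]
      exact ⟨P.deg_lt_natCast.2 hrlt, hrI hax⟩
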